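/- arXiv:2208.06016 — 3 statements merged into one kernel-verified Lean document; each statement's English description precedes it below -/
import Mathlib

section
/- (Proposition 1, exact form for integer shape.) Let D be the distance from a uniformly random point of the disk of radius R > 0 (centered at the origin, at height 0) to the point (0,0,h) with h > 0, and let G be a random variable independent of D with a Gamma distribution of integer shape k ≥ 1 and scale θ > 0. Then for every w > 0 the coverage probability satisfies P(D^{-2} G > w) = (θ/(R² w)) · Σ_{i=0}^{k−1} [γ(i+1, (h²+R²)w/θ) − γ(i+1, h² w/θ)] / i!. -/
open MeasureTheory ProbabilityTheory Real

/-- The closed disk of radius `R` centered at the origin in the plane. -/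
def diskSet (R : ℝ) : Set (ℝ × ℝ) := {p | p.1 ^ 2 + p.2 ^ 2 ≤ R ^ 2}

/-- The uniform probability measure on the closed disk of radius `R`. -/
noncomputable def diskUniform (R : ℝ) : Measure (ℝ × ℝ) :=
  (volume (diskSet R))⁻¹ • volume.restrict (diskSet R)

/-- The Gamma distribution with shape `k` and scale `θ`, given by its density
`x ^ (k-1) * exp (-x/θ) / (Γ k * θ ^ k)` on `(0, ∞)`. -/
noncomputable def gammaScaleMeasure (k θ : ℝ) : Measure ℝ :=
  volume.withDensity fun x =>
    if 0 < x then
      ENNReal.ofReal (x ^ (k - 1) * Real.exp (-x / θ) / (Real.Gamma k * θ ^ k)) else 0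

/-- The lower incomplete gamma function `γ(s, x) = ∫ t in (0, x), t ^ (s-1) * exp (-t)`. -/
noncomputable def lowerGamma (s x : ℝ) : ℝ := ∫ t in (0:ℝ)..x, t ^ (s - 1) * Real.exp (-t)


lemma contE (n : ℕ) : Continuous (fun t : ℝ => t ^ n * Real.exp (-t)) := by
  continuity

lemma integral_exp_neg' (x : ℝ) : ∫ t in (0:ℝ)..x, Real.exp (-t) = 1 - Real.exp (-x) := by
  rw [intervalIntegral.integral_comp_neg Real.exp, integral_exp]
  simp

lemma integral_pow_exp_step (n : ℕ) (x : ℝ) :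
    ∫ t in (0:ℝ)..x, t ^ (n+1) * Real.exp (-t)
      = (n+1) * (∫ t in (0:ℝ)..x, t ^ n * Real.exp (-t)) - x ^ (n+1) * Real.exp (-x) := by
  have hderiv : ∀ t ∈ Set.uIcc (0:ℝ) x,
      HasDerivAt (fun t : ℝ => -(t ^ (n+1) * Real.exp (-t)))
        (t ^ (n+1) * Real.exp (-t) - (n+1) * (t ^ n * Real.exp (-t))) t := by
    intro t _
    have h1 : HasDerivAt (fun t : ℝ => t ^ (n+1)) ((n+1) * t ^ n) t := by
      simpa using (hasDerivAt_pow (n+1) t)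
    have h2 : HasDerivAt (fun t : ℝ => Real.exp (-t)) (-Real.exp (-t)) t := by
      exact ((hasDerivAt_neg t).exp).congr_deriv (by ring)
    have := (h1.mul h2).neg
    exact this.congr_deriv (by ring)
  have hint : IntervalIntegrable
      (fun t => t ^ (n+1) * Real.exp (-t) - (n+1) * (t ^ n * Real.exp (-t)))
      volume 0 x := by
    apply Continuous.intervalIntegrable
    continuity
  have h := intervalIntegral.integral_eq_sub_of_hasDerivAt hderiv hint
  rw [intervalIntegral.integral_sub ((contE (n+1)).intervalIntegrable _ _)
      ((show Continuous (fun t : ℝ => ((n:ℝ)+1) * (t ^ n * Real.exp (-t))) from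
        continuous_const.mul (contE n)).intervalIntegrable _ _),
    intervalIntegral.integral_const_mul] at h
  simp only [zero_pow, Nat.succ_ne_zero, ne_eq, not_false_iff, zero_mul, neg_zero, sub_zero] at h
  linarith [h]

/-- `∫_0^x t^n e^{-t} dt = n! (1 - e^{-x} ∑_{i<n+1} x^i/i!)`. -/
lemma integral_pow_exp (n : ℕ) (x : ℝ) :
    ∫ t in (0:ℝ)..x, t ^ n * Real.exp (-t)
      = (n.factorial : ℝ) * (1 - Real.exp (-x) * ∑ i ∈ Finset.range (n+1), x ^ i / i.factorial) := by
  induction n with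
  | zero => simpa using integral_exp_neg' x
  | succ n ih =>
    rw [integral_pow_exp_step n x, ih, Finset.sum_range_succ (n := n+1)]
    have hfac : ((n+1).factorial : ℝ) = (n+1) * n.factorial := by
      push_cast [Nat.factorial_succ]; ring
    rw [hfac]
    have hne : ((n+1).factorial : ℝ) ≠ 0 := Nat.cast_ne_zero.mpr (Nat.factorial_ne_zero _)
    field_simp [hfac]
    ring

lemma lowerGamma_nat (i : ℕ) (x : ℝ) :
    lowerGamma ((i : ℝ) + 1) x = ∫ t in (0:ℝ)..x, t ^ i * Real.exp (-t) := by
  unfold lowerGamma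
  congr 1 with t
  rw [add_sub_cancel_right, Real.rpow_natCast]

lemma gammaScale_eq_gammaMeasure (k : ℕ) (θ : ℝ) (hk : 1 ≤ k) (hθ : 0 < θ) :
    gammaScaleMeasure k θ = gammaMeasure k (1/θ) := by
  unfold gammaScaleMeasure gammaMeasure
  apply withDensity_congr_ae
  have h0 : (volume : Measure ℝ) {(0:ℝ)} = 0 := measure_singleton 0
  have hG : (0:ℝ) < Real.Gamma k :=
    Real.Gamma_pos_of_pos (by exact_mod_cast Nat.pos_of_ne_zero (by omega))
  filter_upwards [compl_mem_ae_iff.mpr h0] with x hx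
  have hx0 : x ≠ 0 := by simpa using hx
  rcases lt_or_gt_of_ne hx0 with hneg | hpos
  · rw [if_neg (not_lt.mpr hneg.le), gammaPDF_of_neg hneg]
  · rw [if_pos hpos, gammaPDF_of_nonneg hpos.le]
    congr 1
    rw [show ((k:ℝ)) = ((k:ℕ):ℝ) from rfl, Real.rpow_natCast θ k, Real.rpow_natCast (1/θ) k]
    rw [show -(1/θ * x) = -x/θ by ring]
    rw [div_pow, one_pow]
    field_simp

lemma gammaScale_Iic (k : ℕ) (θ : ℝ) (hk : 1 ≤ k) (hθ : 0 < θ) (s : ℝ) (hs : 0 ≤ s) :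
    gammaScaleMeasure k θ (Set.Iic s) =
      ENNReal.ofReal (1 - Real.exp (-(s/θ)) * ∑ i ∈ Finset.range k, (s/θ)^i / i.factorial) := by
  set n := k - 1 with hn
  have hkn : k = n + 1 := by omega
  have hG : Real.Gamma k = n.factorial := by
    rw [hkn]; push_cast; exact Real.Gamma_nat_eq_factorial n
  rw [gammaScaleMeasure, withDensity_apply _ measurableSet_Iic]
  rw [← Set.Iic_union_Ioc_eq_Iic hs, lintegral_union measurableSet_Ioc
    (Set.Iic_disjoint_Ioc le_rfl)]
  have h1 : ∫⁻ x in Set.Iic (0:ℝ), (fun x => if 0 < x then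
      ENNReal.ofReal (x ^ ((k:ℝ) - 1) * Real.exp (-x / θ) / (Real.Gamma k * θ ^ (k:ℝ))) else 0) x
      = 0 := by
    rw [setLIntegral_congr_fun measurableSet_Iic
      (fun x (hx : x ∈ Set.Iic 0) => if_neg (not_lt.mpr hx))]
    simp
  rw [h1, zero_add]
  have hg2 : ∀ x ∈ Set.Ioc (0:ℝ) s, (fun x => if 0 < x then
      ENNReal.ofReal (x ^ ((k:ℝ) - 1) * Real.exp (-x / θ) / (Real.Gamma k * θ ^ (k:ℝ))) else 0) x
      = ENNReal.ofReal (x ^ n * Real.exp (-x / θ) / (n.factorial * θ ^ k)) := by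
    intro x hx
    simp only [if_pos hx.1]
    rw [show (k:ℝ) - 1 = ((n:ℕ):ℝ) by rw [hkn]; push_cast; ring, Real.rpow_natCast,
      hG, Real.rpow_natCast]
  rw [setLIntegral_congr_fun measurableSet_Ioc hg2]
  have hcont : Continuous (fun x : ℝ => x ^ n * Real.exp (-x / θ) / (n.factorial * θ ^ k)) := by
    exact ((continuous_pow n).mul (Real.continuous_exp.comp
      (continuous_id.neg.div_const θ))).div_const _
  have hint : IntegrableOn (fun x : ℝ => x ^ n * Real.exp (-x / θ) / (n.factorial * θ ^ k))
      (Set.Ioc 0 s) volume := hcont.integrableOn_Ioc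
  rw [← ofReal_integral_eq_lintegral_ofReal hint ((ae_restrict_iff' measurableSet_Ioc).mpr
    (ae_of_all _ (fun x hx => by have h1 : 0 < x := hx.1; positivity)))]
  congr 1
  rw [← intervalIntegral.integral_of_le hs]
  have hci := intervalIntegral.integral_comp_mul_right (a:=(0:ℝ)) (b:=s)
    (f := fun t => t ^ n * Real.exp (-t)) (inv_ne_zero hθ.ne')
  have hfne : (n.factorial : ℝ) ≠ 0 := Nat.cast_ne_zero.mpr (Nat.factorial_ne_zero _)
  have hcongr : Set.EqOn (fun x : ℝ => x ^ n * Real.exp (-x / θ) / (n.factorial * θ ^ k))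
      (fun x : ℝ => (θ^n / (n.factorial * θ ^ k)) * ((x*θ⁻¹) ^ n * Real.exp (-(x*θ⁻¹))))
      (Set.uIcc 0 s) := by
    intro x _
    simp only
    have e1 : (x*θ⁻¹)^n = x^n / θ^n := by rw [mul_pow, inv_pow, div_eq_mul_inv]
    have e2 : -(x*θ⁻¹) = -x/θ := by ring
    rw [e1, e2]
    field_simp
  rw [intervalIntegral.integral_congr hcongr, intervalIntegral.integral_const_mul, hci]
  rw [zero_mul, integral_pow_exp n (s * θ⁻¹)]
  rw [← hkn]
  have hst : s * θ⁻¹ = s / θ := by field_simp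
  rw [hst, smul_eq_mul]
  have hθk : θ ^ k = θ ^ (n+1) := by rw [hkn]
  rw [hθk, pow_succ]
  field_simp

lemma gammaScale_prob (k : ℕ) (θ : ℝ) (hk : 1 ≤ k) (hθ : 0 < θ) :
    IsProbabilityMeasure (gammaScaleMeasure k θ) := by
  rw [gammaScale_eq_gammaMeasure k θ hk hθ]
  exact isProbabilityMeasure_gammaMeasure (by exact_mod_cast Nat.pos_of_ne_zero (by omega))
    (by positivity)

lemma gammaScale_Ioi (k : ℕ) (θ : ℝ) (hk : 1 ≤ k) (hθ : 0 < θ) (s : ℝ) (hs : 0 ≤ s) :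
    gammaScaleMeasure k θ (Set.Ioi s) =
      ENNReal.ofReal (Real.exp (-(s/θ)) * ∑ i ∈ Finset.range k, (s/θ)^i / i.factorial) := by
  have hprob : IsProbabilityMeasure (gammaScaleMeasure k θ) := gammaScale_prob k θ hk hθ
  set Q : ℝ := Real.exp (-(s/θ)) * ∑ i ∈ Finset.range k, (s/θ)^i / i.factorial with hQ
  have ht : 0 ≤ s/θ := div_nonneg hs hθ.le
  have hQ1 : Q ≤ 1 := by
    have h1 := Real.sum_le_exp_of_nonneg ht k
    calc Q ≤ Real.exp (-(s/θ)) * Real.exp (s/θ) := by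
            apply mul_le_mul_of_nonneg_left h1 (Real.exp_nonneg _)
      _ = 1 := by rw [← Real.exp_add]; simp
  rw [← Set.compl_Iic, prob_compl_eq_one_sub measurableSet_Iic,
    gammaScale_Iic k θ hk hθ s hs, ← hQ]
  rw [← ENNReal.ofReal_one, ← ENNReal.ofReal_sub 1 (by linarith : (0:ℝ) ≤ 1 - Q),
    sub_sub_cancel]

lemma diskSet_measurable (R : ℝ) : MeasurableSet (diskSet R) := by
  apply measurableSet_le <;> fun_prop

lemma volume_diskSet (s : ℝ) (hs : 0 ≤ s) :
    volume (diskSet s) = ENNReal.ofReal (π * s ^ 2) := by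
  have hpre : Complex.measurableEquivRealProd ⁻¹' (diskSet s) = Metric.closedBall 0 s := by
    ext z
    simp only [diskSet, Set.mem_preimage, Set.mem_setOf_eq, Metric.mem_closedBall,
      Complex.dist_eq, sub_zero, Complex.measurableEquivRealProd_apply]
    have habs : ‖z‖ ^ 2 = z.re ^ 2 + z.im ^ 2 := by
      rw [Complex.sq_norm, Complex.normSq_apply]; ring
    constructor
    · intro hz
      nlinarith [norm_nonneg z]
    · intro hz
      nlinarith [norm_nonneg z]
  rw [← Complex.volume_preserving_equiv_real_prod.measure_preimage
    (diskSet_measurable s).nullMeasurableSet, hpre, Complex.volume_closedBall]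
  rw [ENNReal.ofReal_mul Real.pi_nonneg, ← ENNReal.ofReal_pow hs]
  rw [mul_comm]
  congr 1
  rw [← NNReal.coe_real_pi, ENNReal.ofReal_coe_nnreal]

lemma map_sq_disk (R : ℝ) (hR : 0 < R) :
    Measure.map (fun p : ℝ × ℝ => p.1 ^ 2 + p.2 ^ 2) (volume.restrict (diskSet R))
      = ENNReal.ofReal π • volume.restrict (Set.Icc 0 (R ^ 2)) := by
  have hm : Measurable fun p : ℝ × ℝ => p.1 ^ 2 + p.2 ^ 2 := by fun_prop
  have hfin : IsFiniteMeasure (volume.restrict (diskSet R)) := by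
    constructor
    rw [Measure.restrict_apply_univ, volume_diskSet R hR.le]
    exact ENNReal.ofReal_lt_top
  refine Measure.ext_of_Iic _ _ (fun u => ?_)
  rw [Measure.map_apply hm measurableSet_Iic,
    Measure.restrict_apply (hm measurableSet_Iic), Measure.smul_apply,
    Measure.restrict_apply measurableSet_Iic, smul_eq_mul]
  rcases lt_or_ge u 0 with hu | hu
  · have h1 : (fun p : ℝ × ℝ => p.1 ^ 2 + p.2 ^ 2) ⁻¹' Set.Iic u ∩ diskSet R = ∅ := by
      ext p
      simp only [Set.mem_inter_iff, Set.mem_preimage, Set.mem_Iic, Set.mem_empty_iff_false,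
        iff_false, not_and, diskSet, Set.mem_setOf_eq]
      intro hp
      nlinarith [sq_nonneg p.1, sq_nonneg p.2]
    have h2 : Set.Iic u ∩ Set.Icc 0 (R ^ 2) = ∅ := by
      ext x
      simp only [Set.mem_inter_iff, Set.mem_Iic, Set.mem_Icc, Set.mem_empty_iff_false, iff_false,
        not_and]
      intro hx h0
      linarith
    rw [h1, h2]
    simp
  rcases le_or_gt u (R ^ 2) with hu2 | hu2
  · have h1 : (fun p : ℝ × ℝ => p.1 ^ 2 + p.2 ^ 2) ⁻¹' Set.Iic u ∩ diskSet R
        = diskSet (Real.sqrt u) := by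
      ext p
      simp only [Set.mem_inter_iff, Set.mem_preimage, Set.mem_Iic, diskSet, Set.mem_setOf_eq,
        Real.sq_sqrt hu]
      exact ⟨fun hp => hp.1, fun hp => ⟨hp, hp.trans hu2⟩⟩
    have h2 : Set.Iic u ∩ Set.Icc 0 (R ^ 2) = Set.Icc 0 u := by
      ext x
      simp only [Set.mem_inter_iff, Set.mem_Iic, Set.mem_Icc]
      constructor
      · rintro ⟨h1, h2, h3⟩; exact ⟨h2, h1⟩
      · rintro ⟨h1, h2⟩; exact ⟨h2, h1, h2.trans hu2⟩
    rw [h1, h2, volume_diskSet _ (Real.sqrt_nonneg u), Real.sq_sqrt hu, Real.volume_Icc,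
      ← ENNReal.ofReal_mul Real.pi_nonneg]
    norm_num
  · have h1 : (fun p : ℝ × ℝ => p.1 ^ 2 + p.2 ^ 2) ⁻¹' Set.Iic u ∩ diskSet R = diskSet R := by
      ext p
      simp only [Set.mem_inter_iff, Set.mem_preimage, Set.mem_Iic, diskSet, Set.mem_setOf_eq]
      exact ⟨fun hp => hp.2, fun hp => ⟨hp.trans hu2.le, hp⟩⟩
    have h2 : Set.Iic u ∩ Set.Icc 0 (R ^ 2) = Set.Icc 0 (R ^ 2) := by
      ext x
      simp only [Set.mem_inter_iff, Set.mem_Iic, Set.mem_Icc]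
      constructor
      · rintro ⟨h1, h2, h3⟩; exact ⟨h2, h3⟩
      · rintro ⟨h1, h2⟩; exact ⟨h2.trans hu2.le, h1, h2⟩
    rw [h1, h2, volume_diskSet R hR.le, Real.volume_Icc,
      ← ENNReal.ofReal_mul Real.pi_nonneg]
    norm_num


theorem coverage_probability (Ω : Type*) [MeasurableSpace Ω] (P : Measure Ω)
    [IsProbabilityMeasure P] (R h θ : ℝ) (k : ℕ) (hR : 0 < R) (hh : 0 < h)
    (hθ : 0 < θ) (hk : 1 ≤ k) (D G : Ω → ℝ) (hDm : Measurable D) (hGm : Measurable G)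
    (hD : Measure.map D P =
      Measure.map (fun p : ℝ × ℝ => Real.sqrt (p.1 ^ 2 + p.2 ^ 2 + h ^ 2)) (diskUniform R))
    (hG : Measure.map G P = gammaScaleMeasure k θ)
    (hind : IndepFun D G P) (w : ℝ) (hw : 0 < w) :
    P {ω | w < ((D ω) ^ 2)⁻¹ * G ω} =
      ENNReal.ofReal (θ / (R ^ 2 * w) * ∑ i ∈ Finset.range k,
        (lowerGamma ((i : ℝ) + 1) ((h ^ 2 + R ^ 2) * w / θ) -
          lowerGamma ((i : ℝ) + 1) (h ^ 2 * w / θ)) / (Nat.factorial i)) := by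
  have hGprob : IsProbabilityMeasure (gammaScaleMeasure k θ) := gammaScale_prob k θ hk hθ
  haveI := gammaScale_prob k θ hk hθ
  haveI hmapG : IsProbabilityMeasure (Measure.map G P) := by rw [hG]; exact hGprob
  haveI hmapD : IsProbabilityMeasure (Measure.map D P) :=
    Measure.isProbabilityMeasure_map hDm.aemeasurable
  have hS : MeasurableSet {p : ℝ × ℝ | w < (p.1 ^ 2)⁻¹ * p.2} := by
    apply measurableSet_lt measurable_const
    fun_prop
  have hjoint : Measure.map (fun ω => (D ω, G ω)) P
      = (Measure.map D P).prod (Measure.map G P) :=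
    (ProbabilityTheory.indepFun_iff_map_prod_eq_prod_map_map hDm.aemeasurable
      hGm.aemeasurable).mp hind
  have step1 : P {ω | w < ((D ω) ^ 2)⁻¹ * G ω}
      = (Measure.map D P).prod (Measure.map G P) {p : ℝ × ℝ | w < (p.1 ^ 2)⁻¹ * p.2} := by
    rw [← hjoint, Measure.map_apply (hDm.prodMk hGm) hS]
    rfl
  rw [step1, Measure.prod_apply hS, hG, hD]
  have hsqrtm : Measurable fun p : ℝ × ℝ => Real.sqrt (p.1 ^ 2 + p.2 ^ 2 + h ^ 2) := by
    fun_prop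
  rw [lintegral_map (measurable_measure_prodMk_left hS) hsqrtm]
  -- now pointwise evaluation
  set F : ℝ → ℝ := fun q => Real.exp (-(w * (q + h ^ 2) / θ)) *
    ∑ i ∈ Finset.range k, (w * (q + h ^ 2) / θ) ^ i / i.factorial with hF
  have hpoint : ∀ p : ℝ × ℝ,
      gammaScaleMeasure k θ
        (Prod.mk (Real.sqrt (p.1 ^ 2 + p.2 ^ 2 + h ^ 2)) ⁻¹' {p : ℝ × ℝ | w < (p.1 ^ 2)⁻¹ * p.2})
      = ENNReal.ofReal (F (p.1 ^ 2 + p.2 ^ 2)) := by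
    intro p
    have hv : 0 < p.1 ^ 2 + p.2 ^ 2 + h ^ 2 := by positivity
    have hsq : Real.sqrt (p.1 ^ 2 + p.2 ^ 2 + h ^ 2) ^ 2 = p.1 ^ 2 + p.2 ^ 2 + h ^ 2 :=
      Real.sq_sqrt hv.le
    have hset : Prod.mk (Real.sqrt (p.1 ^ 2 + p.2 ^ 2 + h ^ 2)) ⁻¹'
        {p : ℝ × ℝ | w < (p.1 ^ 2)⁻¹ * p.2}
        = Set.Ioi (w * (p.1 ^ 2 + p.2 ^ 2 + h ^ 2)) := by
      ext g
      simp only [Set.mem_preimage, Set.mem_setOf_eq, Set.mem_Ioi, hsq]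
      rw [inv_mul_eq_div, lt_div_iff₀ hv]
    rw [hset, gammaScale_Ioi k θ hk hθ _ (by positivity)]
  rw [lintegral_congr hpoint]
  have hFc : Continuous F := by
    apply Continuous.mul
    · exact Real.continuous_exp.comp (by fun_prop)
    · exact continuous_finset_sum _ fun i _ => Continuous.div_const (by fun_prop) _
  have hFm : Measurable fun q : ℝ => ENNReal.ofReal (F q) :=
    ENNReal.measurable_ofReal.comp hFc.measurable
  have hm2 : Measurable fun p : ℝ × ℝ => p.1 ^ 2 + p.2 ^ 2 := by fun_prop
  rw [diskUniform, lintegral_smul_measure, volume_diskSet R hR.le]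
  have e2 : (∫⁻ p in diskSet R, ENNReal.ofReal (F (p.1 ^ 2 + p.2 ^ 2)))
      = ∫⁻ q, ENNReal.ofReal (F q)
          ∂(Measure.map (fun p : ℝ × ℝ => p.1 ^ 2 + p.2 ^ 2) (volume.restrict (diskSet R))) :=
    (lintegral_map hFm hm2).symm
  rw [e2, map_sq_disk R hR, lintegral_smul_measure]
  have hInt : IntegrableOn F (Set.Icc 0 (R ^ 2)) volume := hFc.integrableOn_Icc
  have hnn : 0 ≤ᵐ[volume.restrict (Set.Icc 0 (R ^ 2))] F := by
    rw [Filter.EventuallyLE, ae_restrict_iff' measurableSet_Icc]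
    refine ae_of_all _ fun q hq => ?_
    have hq0 : 0 ≤ q := hq.1
    have hbase : 0 ≤ w * (q + h ^ 2) / θ := by
      apply div_nonneg _ hθ.le
      exact mul_nonneg hw.le (add_nonneg hq0 (sq_nonneg h))
    refine mul_nonneg (Real.exp_nonneg _) (Finset.sum_nonneg fun i _ => ?_)
    exact div_nonneg (pow_nonneg hbase i) (Nat.cast_nonneg _)
  rw [← ofReal_integral_eq_lintegral_ofReal hInt hnn]
  set c := w / θ with hc
  have hc0 : 0 < c := div_pos hw hθ
  have hreal : ∫ q in Set.Icc 0 (R ^ 2), F q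
      = (θ / w) * ∑ i ∈ Finset.range k,
          (lowerGamma ((i : ℝ) + 1) ((h ^ 2 + R ^ 2) * w / θ) -
            lowerGamma ((i : ℝ) + 1) (h ^ 2 * w / θ)) / (Nat.factorial i) := by
    rw [MeasureTheory.integral_Icc_eq_integral_Ioc,
      ← intervalIntegral.integral_of_le (sq_nonneg R)]
    have hFeq : Set.EqOn F (fun q => ∑ i ∈ Finset.range k,
        ((i.factorial : ℝ))⁻¹ * (((q + h ^ 2) * c) ^ i * Real.exp (-((q + h ^ 2) * c))))
        (Set.uIcc 0 (R ^ 2)) := by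
      intro q _
      rw [hF]
      simp only
      rw [Finset.mul_sum]
      apply Finset.sum_congr rfl
      intro i _
      have he : w * (q + h ^ 2) / θ = (q + h ^ 2) * c := by rw [hc]; ring
      rw [he]
      ring
    rw [intervalIntegral.integral_congr hFeq]
    have hcont : ∀ i : ℕ, Continuous fun q : ℝ =>
        ((i.factorial : ℝ))⁻¹ * (((q + h ^ 2) * c) ^ i * Real.exp (-((q + h ^ 2) * c))) := by
      intro i
      apply continuous_const.mul
      apply Continuous.mul (by fun_prop)
      exact Real.continuous_exp.comp (by fun_prop)
    rw [intervalIntegral.integral_finset_sum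
      (fun i _ => ((hcont i).intervalIntegrable _ _))]
    have hterm : ∀ i : ℕ, (∫ q in (0:ℝ)..R ^ 2,
        ((i.factorial : ℝ))⁻¹ * (((q + h ^ 2) * c) ^ i * Real.exp (-((q + h ^ 2) * c))))
        = (i.factorial : ℝ)⁻¹ * (c⁻¹ *
            (lowerGamma ((i : ℝ) + 1) ((h ^ 2 + R ^ 2) * w / θ) -
              lowerGamma ((i : ℝ) + 1) (h ^ 2 * w / θ))) := by
      intro i
      rw [intervalIntegral.integral_const_mul]
      congr 1
      have h1 := intervalIntegral.integral_comp_add_right (a := (0:ℝ)) (b := R ^ 2)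
        (fun x => (x * c) ^ i * Real.exp (-(x * c))) (h ^ 2)
      rw [h1, zero_add]
      have h2 := intervalIntegral.integral_comp_mul_right (a := (h ^ 2 : ℝ))
        (b := R ^ 2 + h ^ 2) (f := fun t => t ^ i * Real.exp (-t)) hc0.ne'
      rw [h2, smul_eq_mul]
      congr 1
      rw [lowerGamma_nat, lowerGamma_nat]
      have hab : IntervalIntegrable (fun t : ℝ => t ^ i * Real.exp (-t)) volume 0
          ((h ^ 2 + R ^ 2) * w / θ) := (contE i).intervalIntegrable _ _
      have hac : IntervalIntegrable (fun t : ℝ => t ^ i * Real.exp (-t)) volume 0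
          (h ^ 2 * w / θ) := (contE i).intervalIntegrable _ _
      rw [intervalIntegral.integral_interval_sub_left hab hac]
      congr 1
      · rw [hc]; ring
      · rw [hc]; ring
    rw [Finset.sum_congr rfl (fun i _ => hterm i), Finset.mul_sum]
    apply Finset.sum_congr rfl
    intro i _
    have hcinv : c⁻¹ = θ / w := by rw [hc, inv_div]
    rw [hcinv]
    ring
  rw [hreal]
  set Sd : ℝ := ∑ i ∈ Finset.range k,
      (lowerGamma ((i : ℝ) + 1) ((h ^ 2 + R ^ 2) * w / θ) -
        lowerGamma ((i : ℝ) + 1) (h ^ 2 * w / θ)) / (Nat.factorial i) with hSd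
  have hπR : (0:ℝ) < π * R ^ 2 := by positivity
  rw [smul_eq_mul, smul_eq_mul]
  rw [← ENNReal.ofReal_mul Real.pi_nonneg]
  have hcc : π * (θ / w * Sd) = (π * R ^ 2) * (θ / (R ^ 2 * w) * Sd) := by
    field_simp
  rw [hcc, ENNReal.ofReal_mul hπR.le, ← mul_assoc,
    ENNReal.inv_mul_cancel (ENNReal.ofReal_pos.mpr hπR).ne' ENNReal.ofReal_ne_top, one_mul]
end

section
/- For every integer k ≥ 1 and reals θ > 0, w > 0, h > 0, R > 0, the integral identity ∫_{1/(h²+R²)}^{1/h²} [γ(k, w/(θ y)) / Γ(k)] · [1/(R² y²)] dy = 1 − (θ/(R² w)) · Σ_{i=0}^{k−1} [γ(i+1, (h²+R²)w/θ) − γ(i+1, h² w/θ)] / i! holds. -/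
open MeasureTheory Real

lemma derivP (n : ℕ) (t : ℝ) :
    HasDerivAt (fun t : ℝ => Real.exp (-t) * ∑ j ∈ Finset.range (n+1), t ^ j / (Nat.factorial j))
      (-(Real.exp (-t) * t ^ n / (Nat.factorial n))) t := by
  have hp : HasDerivAt (fun t : ℝ => ∑ j ∈ Finset.range (n+1), t ^ j / (Nat.factorial j))
      (∑ j ∈ Finset.range n, t ^ j / (Nat.factorial j)) t := by
    have h1 : HasDerivAt (fun t : ℝ => ∑ j ∈ Finset.range (n+1), t ^ j / (Nat.factorial j))
        (∑ j ∈ Finset.range (n+1), (j : ℝ) * t ^ (j-1) / (Nat.factorial j)) t := by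
      apply HasDerivAt.fun_sum
      intro j _
      simpa [div_eq_mul_inv, mul_comm, mul_assoc] using
        (hasDerivAt_pow j t).div_const (Nat.factorial j : ℝ)
    convert h1 using 1
    rw [Finset.sum_range_succ']
    simp only [Nat.cast_zero, pow_zero]
    rw [eq_comm]
    have : ∀ i ∈ Finset.range n, ((i:ℝ)+1) * t ^ (i+1-1) / (Nat.factorial (i+1)) = t ^ i / (Nat.factorial i) := by
      intro i _
      have : (Nat.factorial (i+1) : ℝ) = (i+1) * Nat.factorial i := by
        push_cast [Nat.factorial_succ]; ring
      rw [Nat.add_sub_cancel, this]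
      have h2 : ((i:ℝ)+1) ≠ 0 := by positivity
      field_simp
    rw [Finset.sum_congr rfl (by intro i hi; push_cast; exact this i hi)]
    simp
  have he : HasDerivAt (fun t : ℝ => Real.exp (-t)) (-Real.exp (-t)) t := by
    simpa using (hasDerivAt_neg t).exp
  have := he.fun_mul hp
  refine this.congr_deriv ?_
  rw [Finset.sum_range_succ]
  ring

lemma lowerGamma_nat_s4 (n : ℕ) (x : ℝ) :
    lowerGamma ((n : ℝ) + 1) x =
      (Nat.factorial n) * (1 - Real.exp (-x) * ∑ j ∈ Finset.range (n+1), x ^ j / (Nat.factorial j)) := by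
  have hfac : (Nat.factorial n : ℝ) ≠ 0 := by positivity
  unfold lowerGamma
  have hrw : ∀ t : ℝ, t ^ ((n : ℝ) + 1 - 1) * Real.exp (-t) = t ^ n * Real.exp (-t) := by
    intro t
    rw [add_sub_cancel_right, Real.rpow_natCast]
  simp_rw [hrw]
  rw [intervalIntegral.integral_eq_sub_of_hasDerivAt
    (f := fun t => -((Nat.factorial n : ℝ) * (Real.exp (-t) * ∑ j ∈ Finset.range (n+1), t ^ j / (Nat.factorial j))))
    (fun t _ => by
      have := ((derivP n t).const_mul (Nat.factorial n : ℝ)).fun_neg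
      convert this using 1
      field_simp)
    ((Continuous.intervalIntegrable (by fun_prop : Continuous fun t : ℝ => t ^ n * Real.exp (-t))) 0 x)]
  have h0 : ∑ j ∈ Finset.range (n+1), (0:ℝ) ^ j / (Nat.factorial j) = 1 := by
    rw [Finset.sum_eq_single 0]
    · simp
    · intro b _ hb; simp [zero_pow hb]
    · simp
  rw [h0]
  simp
  ring

theorem outage_integral_closed_form (k : ℕ) (hk : 1 ≤ k) (θ w h R : ℝ)
    (hθ : 0 < θ) (hw : 0 < w) (hh : 0 < h) (hR : 0 < R) :
    (∫ y in (1 / (h ^ 2 + R ^ 2))..(1 / h ^ 2),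
        (lowerGamma k (w / (θ * y)) / Real.Gamma k) * (1 / (R ^ 2 * y ^ 2))) =
      1 - θ / (R ^ 2 * w) * ∑ i ∈ Finset.range k,
        (lowerGamma ((i : ℝ) + 1) ((h ^ 2 + R ^ 2) * w / θ) -
          lowerGamma ((i : ℝ) + 1) (h ^ 2 * w / θ)) / (Nat.factorial i) := by
  obtain ⟨m, rfl⟩ : ∃ m, k = m + 1 := ⟨k - 1, (Nat.succ_pred_eq_of_pos hk).symm⟩
  have hθ' := hθ.ne'
  have hw' := hw.ne'
  have hR' := hR.ne'
  have hh2 : (0:ℝ) < h ^ 2 := by positivity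
  have hhR : (0:ℝ) < h ^ 2 + R ^ 2 := by positivity
  have hfac : (Nat.factorial m : ℝ) ≠ 0 := by positivity
  have hpos : ∀ y ∈ Set.uIcc (1 / (h ^ 2 + R ^ 2)) (1 / h ^ 2), 0 < y := by
    intro y hy
    have h1 : (0:ℝ) < min (1 / (h ^ 2 + R ^ 2)) (1 / h ^ 2) := by positivity
    have h2 : min (1 / (h ^ 2 + R ^ 2)) (1 / h ^ 2) ≤ y := (Set.mem_uIcc.mp hy).elim (fun q => (min_le_left _ _).trans q.1) (fun q => (min_le_right _ _).trans q.1)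
    exact lt_of_lt_of_le h1 h2
  have hcast : ((m + 1 : ℕ) : ℝ) = (m : ℝ) + 1 := by push_cast; ring
  rw [hcast, Real.Gamma_nat_eq_factorial]
  simp_rw [lowerGamma_nat_s4, mul_div_cancel_left₀ _ hfac]
  -- FTC
  rw [intervalIntegral.integral_eq_sub_of_hasDerivAt
    (f := fun y : ℝ => -(θ / (R ^ 2 * w)) * (w / (θ * y) +
      ∑ i ∈ Finset.range (m+1), Real.exp (-(w / (θ * y))) *
        ∑ j ∈ Finset.range (i+1), (w / (θ * y)) ^ j / (Nat.factorial j)))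
    (fun y hy => by
      have hy0 : y ≠ 0 := (hpos y hy).ne'
      have hu : HasDerivAt (fun y : ℝ => w / (θ * y)) (-(w / θ) / y ^ 2) y := by
        have h1 : HasDerivAt (fun y : ℝ => (w / θ) * y⁻¹) ((w / θ) * -(y ^ 2)⁻¹) y :=
          (hasDerivAt_inv hy0).const_mul (w / θ)
        have h2 : (fun y : ℝ => w / (θ * y)) = fun y : ℝ => (w / θ) * y⁻¹ := by
          funext z; simp [div_eq_mul_inv, mul_inv]; ring
        rw [h2]
        convert h1 using 1; ring
      have hG : HasDerivAt (fun u : ℝ => u + ∑ i ∈ Finset.range (m+1),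
            Real.exp (-u) * ∑ j ∈ Finset.range (i+1), u ^ j / (Nat.factorial j))
          (1 + ∑ i ∈ Finset.range (m+1),
            -(Real.exp (-(w / (θ * y))) * (w / (θ * y)) ^ i / (Nat.factorial i))) (w / (θ * y)) :=
        (hasDerivAt_id _).add (HasDerivAt.fun_sum fun i _ => derivP i _)
      have hcomp := (hG.comp y hu).const_mul (-(θ / (R ^ 2 * w)))
      refine hcomp.congr_deriv ?_
      have hsum : ∑ i ∈ Finset.range (m+1),
          -(Real.exp (-(w / (θ * y))) * (w / (θ * y)) ^ i / (Nat.factorial i)) =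
          -(Real.exp (-(w / (θ * y))) * ∑ i ∈ Finset.range (m+1), (w / (θ * y)) ^ i / (Nat.factorial i)) := by
        rw [Finset.mul_sum, ← Finset.sum_neg_distrib]
        exact Finset.sum_congr rfl fun i _ => by rw [mul_div_assoc]
      rw [hsum]
      field_simp
      ring)
    (by
      apply ContinuousOn.intervalIntegrable
      have hne : ∀ y ∈ Set.uIcc (1 / (h ^ 2 + R ^ 2)) (1 / h ^ 2), θ * y ≠ 0 :=
        fun y hy => mul_ne_zero hθ' (hpos y hy).ne'
      apply ContinuousOn.mul
      · apply ContinuousOn.sub continuousOn_const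
        apply ContinuousOn.mul
        · exact Real.continuous_exp.comp_continuousOn
            ((continuousOn_const.div ((continuous_const.mul continuous_id).continuousOn) hne).neg)
        · apply continuousOn_finset_sum
          intro i _
          exact ((continuousOn_const.div ((continuous_const.mul continuous_id).continuousOn) hne).pow i).div_const _
      · exact continuousOn_const.div
          ((continuous_const.mul (continuous_pow 2)).continuousOn)
          (fun y hy => by
            have := (hpos y hy).ne'
            positivity))]
  have hub : w / (θ * (1 / h ^ 2)) = h ^ 2 * w / θ := by field_simp
  have hua : w / (θ * (1 / (h ^ 2 + R ^ 2))) = (h ^ 2 + R ^ 2) * w / θ := by field_simp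
  simp only [hub, hua]
  have hterm : ∀ i ∈ Finset.range (m+1),
      ((Nat.factorial i : ℝ) *
        (1 - rexp (-((h ^ 2 + R ^ 2) * w / θ)) *
          ∑ j ∈ Finset.range (i + 1), ((h ^ 2 + R ^ 2) * w / θ) ^ j / (Nat.factorial j)) -
        (Nat.factorial i : ℝ) *
        (1 - rexp (-(h ^ 2 * w / θ)) *
          ∑ j ∈ Finset.range (i + 1), (h ^ 2 * w / θ) ^ j / (Nat.factorial j))) / (Nat.factorial i) =
      (rexp (-(h ^ 2 * w / θ)) * ∑ j ∈ Finset.range (i + 1), (h ^ 2 * w / θ) ^ j / (Nat.factorial j)) -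
      (rexp (-((h ^ 2 + R ^ 2) * w / θ)) *
        ∑ j ∈ Finset.range (i + 1), ((h ^ 2 + R ^ 2) * w / θ) ^ j / (Nat.factorial j)) := by
    intro i _
    have hfi : (Nat.factorial i : ℝ) ≠ 0 := by positivity
    field_simp
    ring
  rw [Finset.sum_congr rfl hterm, Finset.sum_sub_distrib]
  field_simp
  ring
end

section
/- (Theorem 1, conditional form.) Let A and B be independent random variables with Gamma distributions of integer shapes k_a ≥ 1 and k_b ≥ 1 respectively and common scale θ > 0. Then for every t > 0, P(t − B ≤ A ≤ t) = γ(k_a, t/θ)/Γ(k_a) − γ(k_b, t/θ)/Γ(k_b) + (e^{−t/θ}/(Γ(k_b) θ^{k_b})) · Σ_{μ=0}^{k_a−1} (1/(μ! θ^μ)) · Σ_{ν=0}^{μ} C(μ,ν) (−1)^{μ−ν} t^{k_b+μ} / (k_b + μ − ν), where C(μ,ν) is the binomial coefficient. -/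
open MeasureTheory ProbabilityTheory Real

noncomputable def expSum (n : ℕ) (y : ℝ) : ℝ := ∑ μ ∈ Finset.range n, y ^ μ / (Nat.factorial μ)

lemma expSum_zero' (n : ℕ) (hn : 1 ≤ n) : expSum n 0 = 1 := by
  unfold expSum
  rw [Finset.sum_eq_single 0]
  · simp
  · intro b _ hb
    simp [zero_pow hb]
  · intro h; simp at h; omega

lemma hasDerivAt_expSum (n : ℕ) (y : ℝ) :
    HasDerivAt (expSum (n + 1)) (expSum n y) y := by
  induction n with
  | zero =>
    have : expSum 1 = fun _ : ℝ => 1 := by funext z; simp [expSum]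
    rw [this]
    simpa [expSum] using (hasDerivAt_const y (1:ℝ))
  | succ m ih =>
    have h1 : expSum (m + 2) = fun z => expSum (m + 1) z + z ^ (m+1) / (Nat.factorial (m+1)) := by
      funext z; simp [expSum, Finset.sum_range_succ]
    rw [h1]
    have h2 : HasDerivAt (fun z : ℝ => z ^ (m+1) / (Nat.factorial (m+1)))
        (y ^ m / (Nat.factorial m)) y := by
      have := (hasDerivAt_pow (m+1) y).div_const (Nat.factorial (m+1) : ℝ)
      refine this.congr_deriv ?_
      rw [Nat.add_sub_cancel, Nat.factorial_succ, Nat.cast_mul, mul_div_mul_left _ _ (by positivity)]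
    have h3 : expSum (m + 1) y + y ^ (m+1) / (Nat.factorial (m+1)) = expSum (m+2) y := by
      simp [expSum, Finset.sum_range_succ]
    have h4 := ih.add h2
    refine h4.congr_deriv ?_
    simp [expSum, Finset.sum_range_succ]

lemma integral_pow_exp_s7 (k : ℕ) (y : ℝ) :
    ∫ u in (0:ℝ)..y, u ^ k * Real.exp (-u)
      = (Nat.factorial k) * (1 - Real.exp (-y) * expSum (k+1) y) := by
  set F : ℝ → ℝ := fun z => (Nat.factorial k) * (1 - Real.exp (-z) * expSum (k+1) z) with hF
  have hderiv : ∀ z : ℝ, HasDerivAt F (z ^ k * Real.exp (-z)) z := by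
    intro z
    have he : HasDerivAt (fun z : ℝ => Real.exp (-z)) (-Real.exp (-z)) z := by
      exact ((Real.hasDerivAt_exp (-z)).comp z (hasDerivAt_neg z)).congr_deriv (by ring)
    have hs := hasDerivAt_expSum k z
    have hmul : HasDerivAt (fun z : ℝ => Real.exp (-z) * expSum (k+1) z)
        (-Real.exp (-z) * expSum (k+1) z + Real.exp (-z) * expSum k z) z := he.mul hs
    have : HasDerivAt F ((Nat.factorial k) *
        (0 - (-Real.exp (-z) * expSum (k+1) z + Real.exp (-z) * expSum k z))) z :=
      (((hasDerivAt_const z (1:ℝ)).sub hmul).const_mul _)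
    convert this using 1
    have hdiff : expSum (k+1) z - expSum k z = z ^ k / (Nat.factorial k) := by
      simp [expSum, Finset.sum_range_succ]
    have hfac : (Nat.factorial k : ℝ) ≠ 0 := by positivity
    have : expSum (k+1) z = expSum k z + z ^ k / (Nat.factorial k) := by linarith
    rw [this]
    field_simp
    ring
  have hint : IntervalIntegrable (fun u : ℝ => u ^ k * Real.exp (-u)) volume 0 y :=
    (Continuous.mul (continuous_pow k) (Real.continuous_exp.comp continuous_neg)).intervalIntegrable 0 y
  have := intervalIntegral.integral_eq_sub_of_hasDerivAt (fun z _ => hderiv z) hint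
  rw [this]
  have hF0 : F 0 = 0 := by
    rw [hF]
    simp only [Real.exp_zero, one_mul, expSum_zero' (k+1) (by omega)]
    simp
  rw [hF0, sub_zero]

lemma lowerGamma_nat_s7 (n : ℕ) (hn : 1 ≤ n) (y : ℝ) :
    (∫ t in (0:ℝ)..y, t ^ ((n:ℝ) - 1) * Real.exp (-t))
      = (Nat.factorial (n-1)) * (1 - Real.exp (-y) * expSum n y) := by
  have hcast : ((n:ℝ) - 1) = ((n - 1 : ℕ) : ℝ) := by
    rw [Nat.cast_sub hn]; norm_num
  have h1 : ∀ t : ℝ, t ^ ((n:ℝ) - 1) * Real.exp (-t) = t ^ (n - 1 : ℕ) * Real.exp (-t) := by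
    intro t
    rw [hcast, Real.rpow_natCast]
  simp_rw [h1]
  have := integral_pow_exp_s7 (n - 1) y
  rwa [(by omega : n - 1 + 1 = n)] at this

noncomputable def Fcdf (n : ℕ) (θ t : ℝ) : ℝ := 1 - Real.exp (-(t/θ)) * expSum n (t/θ)

lemma density_integral (n : ℕ) (hn : 1 ≤ n) (θ : ℝ) (hθ : 0 < θ) (t : ℝ) :
    ∫ x in (0:ℝ)..t, x ^ (n - 1 : ℕ) * Real.exp (-x/θ) / (Real.Gamma n * θ^n)
      = Fcdf n θ t := by
  have hΓ : Real.Gamma n = Nat.factorial (n - 1) := by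
    have h := Real.Gamma_nat_eq_factorial (n - 1)
    have hc : ((n - 1 : ℕ) : ℝ) + 1 = (n : ℝ) := by
      rw [Nat.cast_sub hn]; norm_num
    rwa [hc] at h
  have hsub : ∀ x : ℝ, (fun u : ℝ => u ^ (n-1:ℕ) * Real.exp (-u)) (x / θ)
      = (x ^ (n-1:ℕ) * Real.exp (-x/θ)) / θ^(n-1:ℕ) := by
    intro x
    simp only [div_pow, neg_div]
    ring
  have key : ∫ x in (0:ℝ)..t, x ^ (n-1:ℕ) * Real.exp (-x/θ)
      = θ^n * ((Nat.factorial (n-1)) * (1 - Real.exp (-(t/θ)) * expSum n (t/θ))) := by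
    have h1 := intervalIntegral.integral_comp_div (a := 0) (b := t)
      (f := fun u : ℝ => u ^ (n-1:ℕ) * Real.exp (-u)) (ne_of_gt hθ)
    simp_rw [hsub] at h1
    rw [intervalIntegral.integral_div] at h1
    have h2 : ∫ x in (0:ℝ)..t, x ^ (n-1:ℕ) * Real.exp (-x/θ)
        = θ^(n-1:ℕ) * (θ • ∫ u in (0:ℝ)/θ..t/θ, u ^ (n-1:ℕ) * Real.exp (-u)) := by
      rw [← h1]
      field_simp
    rw [h2, zero_div, smul_eq_mul]
    rw [integral_pow_exp_s7 (n-1) (t/θ), (by omega : n - 1 + 1 = n)]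
    have hp : θ^n = θ^(n-1:ℕ) * θ := by
      rw [← pow_succ, (by omega : n - 1 + 1 = n)]
    rw [hp]
    ring
  rw [intervalIntegral.integral_div, key, hΓ, Fcdf]
  have h3 : (Nat.factorial (n-1) : ℝ) ≠ 0 := by positivity
  have h4 : θ^n ≠ 0 := by positivity
  field_simp

lemma neg_one_pow_sub (μ ν : ℕ) (h : ν ≤ μ) : ((-1:ℝ))^(ν + μ) = (-1:ℝ)^(μ - ν) := by
  have : ν + μ = (μ - ν) + 2*ν := by omega
  rw [this, pow_add, pow_mul, neg_one_sq, one_pow, mul_one]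

lemma beta_integral (m : ℕ) (hm : 1 ≤ m) (μ : ℕ) (t : ℝ) :
    ∫ b in (0:ℝ)..t, b ^ (m - 1 : ℕ) * (t - b) ^ μ
      = ∑ ν ∈ Finset.range (μ + 1),
          (Nat.choose μ ν : ℝ) * (-1:ℝ)^(μ - ν) * t^(m + μ) / ((m:ℝ) + (μ:ℝ) - (ν:ℝ)) := by
  have expand : ∀ b : ℝ, b ^ (m - 1 : ℕ) * (t - b) ^ μ
      = ∑ ν ∈ Finset.range (μ + 1),
          ((-1:ℝ)^(ν + μ) * t ^ ν * (Nat.choose μ ν : ℝ)) * b ^ (m - 1 + (μ - ν)) := by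
    intro b
    rw [sub_pow, Finset.mul_sum]
    refine Finset.sum_congr rfl fun ν hν => ?_
    rw [pow_add]
    ring
  simp_rw [expand]
  rw [intervalIntegral.integral_finset_sum]
  · refine Finset.sum_congr rfl fun ν hν => ?_
    rw [Finset.mem_range] at hν
    have hνμ : ν ≤ μ := by omega
    rw [intervalIntegral.integral_const_mul, integral_pow]
    have hc : ((m - 1 + (μ - ν) : ℕ) : ℝ) + 1 = (m:ℝ) + (μ:ℝ) - (ν:ℝ) := by
      rw [(by omega : m - 1 + (μ - ν) = m + μ - ν - 1), Nat.cast_sub (by omega : 1 ≤ m + μ - ν),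
        Nat.cast_sub (by omega : ν ≤ m + μ)]
      push_cast
      ring
    rw [hc, zero_pow (by omega), sub_zero, neg_one_pow_sub μ ν hνμ]
    have hpow : t ^ ν * t ^ (m - 1 + (μ - ν) + 1) = t ^ (m + μ) := by
      rw [← pow_add]
      congr 1
      omega
    field_simp
    rw [← hpow]
    ring
  · intro ν hν
    exact ((continuous_const.mul (continuous_pow _)).intervalIntegrable 0 t)
lemma gamma_density_eq (n : ℕ) (hn : 1 ≤ n) (θ : ℝ) (x : ℝ) :
    (if 0 < x then
      ENNReal.ofReal (x ^ ((n:ℝ) - 1) * Real.exp (-x / θ) / (Real.Gamma n * θ ^ (n:ℝ))) else 0)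
    = (Set.Ioi (0:ℝ)).indicator
        (fun x => ENNReal.ofReal (x ^ (n - 1 : ℕ) * Real.exp (-x / θ) / (Real.Gamma n * θ ^ n))) x := by
  have hc : ((n:ℝ) - 1) = ((n - 1 : ℕ) : ℝ) := by rw [Nat.cast_sub hn]; norm_num
  have hp : x ^ ((n:ℝ) - 1) = x ^ (n - 1 : ℕ) := by rw [hc, Real.rpow_natCast]
  have hθp : θ ^ (n:ℝ) = θ ^ (n:ℕ) := Real.rpow_natCast θ n
  rw [Set.indicator_apply]
  simp only [Set.mem_Ioi]
  split_ifs with h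
  · rw [hp, hθp]
  · rfl

lemma gamma_apply_Iic (n : ℕ) (hn : 1 ≤ n) (θ : ℝ) (hθ : 0 < θ) (x : ℝ) (hx : 0 ≤ x) :
    gammaScaleMeasure n θ (Set.Iic x) = ENNReal.ofReal (Fcdf n θ x) := by
  rw [gammaScaleMeasure, withDensity_apply _ measurableSet_Iic]
  have hn' : 0 < n := hn
  have hΓ : 0 < Real.Gamma n := Real.Gamma_pos_of_pos (by exact_mod_cast hn')
  calc ∫⁻ a in Set.Iic x, (if 0 < a then
          ENNReal.ofReal (a ^ ((n:ℝ) - 1) * Real.exp (-a / θ) / (Real.Gamma n * θ ^ (n:ℝ))) else 0)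
      = ∫⁻ a in Set.Iic x, (Set.Ioi (0:ℝ)).indicator
          (fun a => ENNReal.ofReal (a ^ (n - 1 : ℕ) * Real.exp (-a / θ) / (Real.Gamma n * θ ^ n))) a := by
        exact lintegral_congr fun a => gamma_density_eq n hn θ a
    _ = ∫⁻ a in Set.Ioc 0 x,
          ENNReal.ofReal (a ^ (n - 1 : ℕ) * Real.exp (-a / θ) / (Real.Gamma n * θ ^ n)) := by
        rw [lintegral_indicator measurableSet_Ioi,
          Measure.restrict_restrict measurableSet_Ioi, Set.Ioi_inter_Iic]
    _ = ENNReal.ofReal (∫ a in Set.Ioc 0 x,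
          a ^ (n - 1 : ℕ) * Real.exp (-a / θ) / (Real.Gamma n * θ ^ n)) := by
        rw [← ofReal_integral_eq_lintegral_ofReal]
        · exact (Continuous.integrableOn_Ioc (by continuity))
        · refine (ae_restrict_iff' measurableSet_Ioc).2 (Filter.Eventually.of_forall fun a ha => ?_)
          have ha0 : (0:ℝ) < a := ha.1
          positivity
    _ = ENNReal.ofReal (Fcdf n θ x) := by
        rw [← intervalIntegral.integral_of_le hx, density_integral n hn θ hθ]

lemma gamma_singleton (k θ : ℝ) (x : ℝ) : gammaScaleMeasure k θ {x} = 0 := by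
  rw [gammaScaleMeasure]
  exact (withDensity_absolutelyContinuous volume _) (measure_singleton x)

lemma gamma_apply_Iio (n : ℕ) (hn : 1 ≤ n) (θ : ℝ) (hθ : 0 < θ) (x : ℝ) (hx : 0 ≤ x) :
    gammaScaleMeasure n θ (Set.Iio x) = ENNReal.ofReal (Fcdf n θ x) := by
  rw [← gamma_apply_Iic n hn θ hθ x hx, ← Set.Iic_diff_right,
    measure_diff_null (gamma_singleton n θ x)]

lemma gamma_density_measurable (n : ℕ) (hn : 1 ≤ n) (θ : ℝ) :
    Measurable (fun x : ℝ => if 0 < x then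
      ENNReal.ofReal (x ^ ((n:ℝ) - 1) * Real.exp (-x / θ) / (Real.Gamma n * θ ^ (n:ℝ))) else 0) := by
  have heq : (fun x : ℝ => if 0 < x then
      ENNReal.ofReal (x ^ ((n:ℝ) - 1) * Real.exp (-x / θ) / (Real.Gamma n * θ ^ (n:ℝ))) else 0)
      = fun x => (Set.Ioi (0:ℝ)).indicator
        (fun x => ENNReal.ofReal (x ^ (n - 1 : ℕ) * Real.exp (-x / θ) / (Real.Gamma n * θ ^ n))) x :=
    funext (gamma_density_eq n hn θ)
  rw [heq]
  exact Measurable.indicator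
    ((ENNReal.continuous_ofReal.comp (by continuity)).measurable) measurableSet_Ioi

lemma gamma_apply_nonpos (n : ℕ) (hn : 1 ≤ n) (θ : ℝ) (x : ℝ) (hx : x ≤ 0) :
    gammaScaleMeasure n θ (Set.Iio x) = 0 := by
  rw [gammaScaleMeasure, withDensity_apply _ measurableSet_Iio]
  rw [setLIntegral_eq_zero_iff measurableSet_Iio (gamma_density_measurable n hn θ)]
  refine Filter.Eventually.of_forall fun a ha => ?_
  have : ¬ (0 < a) := by simp only [Set.mem_Iio] at ha; push_neg; linarith
  simp [this]

lemma continuous_expSum (n : ℕ) : Continuous (expSum n) :=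
  continuous_finset_sum _ fun i _ => (continuous_pow i).div_const _

lemma continuous_Fcdf (n : ℕ) (θ : ℝ) : Continuous (Fcdf n θ) := by
  unfold Fcdf
  exact continuous_const.sub (((continuous_id.div_const θ).neg.rexp).mul
    ((continuous_expSum n).comp (continuous_id.div_const θ)))

lemma Fcdf_zero (n : ℕ) (hn : 1 ≤ n) (θ : ℝ) : Fcdf n θ 0 = 0 := by
  unfold Fcdf
  rw [zero_div, expSum_zero' n hn]
  simp

lemma Fcdf_nonneg (n : ℕ) (hn : 1 ≤ n) (θ : ℝ) (hθ : 0 < θ) (x : ℝ) (hx : 0 ≤ x) :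
    0 ≤ Fcdf n θ x := by
  have hΓ : 0 < Real.Gamma n := Real.Gamma_pos_of_pos (by exact_mod_cast (hn : 0 < n))
  rw [← density_integral n hn θ hθ x]
  apply intervalIntegral.integral_nonneg hx
  intro u hu
  have hu0 : 0 ≤ u := hu.1
  positivity

lemma lowerGamma_div_Gamma (n : ℕ) (hn : 1 ≤ n) (θ : ℝ) (hθ : 0 < θ) (t : ℝ) :
    lowerGamma n (t/θ) / Real.Gamma n = Fcdf n θ t := by
  have hΓ : Real.Gamma n = Nat.factorial (n - 1) := by
    have h := Real.Gamma_nat_eq_factorial (n - 1)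
    have hc : ((n - 1 : ℕ) : ℝ) + 1 = (n : ℝ) := by rw [Nat.cast_sub hn]; norm_num
    rwa [hc] at h
  rw [lowerGamma, lowerGamma_nat_s7 n hn (t/θ), hΓ, Fcdf]
  have h3 : (Nat.factorial (n-1) : ℝ) ≠ 0 := by positivity
  field_simp

theorem conditional_success_probability (Ω : Type*) [MeasurableSpace Ω] (P : Measure Ω)
    [IsProbabilityMeasure P] (ka kb : ℕ) (hka : 1 ≤ ka) (hkb : 1 ≤ kb) (θ : ℝ)
    (hθ : 0 < θ) (A B : Ω → ℝ) (hAm : Measurable A) (hBm : Measurable B)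
    (hA : Measure.map A P = gammaScaleMeasure ka θ)
    (hB : Measure.map B P = gammaScaleMeasure kb θ)
    (hind : IndepFun A B P) (t : ℝ) (ht : 0 < t) :
    P {ω | t - B ω ≤ A ω ∧ A ω ≤ t} =
      ENNReal.ofReal
        (lowerGamma ka (t / θ) / Real.Gamma ka - lowerGamma kb (t / θ) / Real.Gamma kb +
          Real.exp (-t / θ) / (Real.Gamma kb * θ ^ kb) *
            ∑ μ ∈ Finset.range ka, (1 / (Nat.factorial μ * θ ^ μ)) *
              ∑ ν ∈ Finset.range (μ + 1),
                (Nat.choose μ ν : ℝ) * (-1 : ℝ) ^ (μ - ν) * t ^ (kb + μ) /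
                  ((kb : ℝ) + (μ : ℝ) - (ν : ℝ))) := by
  classical
  have hΓb : 0 < Real.Gamma kb := Real.Gamma_pos_of_pos (by exact_mod_cast (hkb : 0 < kb))
  set μA := gammaScaleMeasure ka θ with hμA
  set μB := gammaScaleMeasure kb θ with hμB
  haveI hPA : IsProbabilityMeasure μA := by
    rw [← hA]; exact Measure.isProbabilityMeasure_map hAm.aemeasurable
  haveI hPB : IsProbabilityMeasure μB := by
    rw [← hB]; exact Measure.isProbabilityMeasure_map hBm.aemeasurable
  set ν := μA.prod μB with hν
  haveI : IsProbabilityMeasure ν := by infer_instance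
  set T : Set (ℝ × ℝ) := {p | t - p.2 ≤ p.1 ∧ p.1 ≤ t} with hTdef
  set T1 : Set (ℝ × ℝ) := {p | p.1 ≤ t} with hT1def
  set T2 : Set (ℝ × ℝ) := {p | p.1 + p.2 < t} with hT2def
  have hT1 : MeasurableSet T1 := measurableSet_le measurable_fst measurable_const
  have hT2 : MeasurableSet T2 := measurableSet_lt (measurable_fst.add measurable_snd)
    measurable_const
  have hT : MeasurableSet T := by
    have h1 : MeasurableSet {p : ℝ × ℝ | t - p.2 ≤ p.1} :=
      measurableSet_le (measurable_const.sub measurable_snd) measurable_fst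
    exact h1.inter hT1
  -- step 1: P of the event equals ν T
  have step1 : P {ω | t - B ω ≤ A ω ∧ A ω ≤ t} = ν T := by
    have hmap : P.map (fun ω => (A ω, B ω)) = ν := by
      rw [hν, ← hA, ← hB]
      exact (indepFun_iff_map_prod_eq_prod_map_map hAm.aemeasurable hBm.aemeasurable).1 hind
    have hpre : {ω | t - B ω ≤ A ω ∧ A ω ≤ t} = (fun ω => (A ω, B ω)) ⁻¹' T := rfl
    rw [hpre, ← Measure.map_apply (hAm.prodMk hBm) hT, hmap]
  -- step 2: T = T1 \ T2
  have hsplit : T = T1 \ T2 := by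
    ext p
    simp only [hTdef, hT1def, hT2def, Set.mem_setOf_eq, Set.mem_diff, not_lt]
    constructor
    · rintro ⟨h1, h2⟩; exact ⟨h2, by linarith⟩
    · rintro ⟨h1, h2⟩; exact ⟨by linarith, h1⟩
  -- step 3: ν T2 = ν (T1 ∩ T2)
  have hnull : ν (T2 \ T1) = 0 := by
    have hsub : T2 \ T1 ⊆ Set.univ ×ˢ Set.Iio (0:ℝ) := by
      rintro ⟨a, b⟩ ⟨h1, h2⟩
      simp only [hT1def, Set.mem_setOf_eq, not_le] at h2
      simp only [hT2def, Set.mem_setOf_eq] at h1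
      exact ⟨trivial, by simp only [Set.mem_Iio]; linarith⟩
    refine measure_mono_null hsub ?_
    rw [hν, Measure.prod_prod, hμB, gamma_apply_nonpos kb hkb θ 0 le_rfl, mul_zero]
  have hinter : ν (T1 ∩ T2) = ν T2 := by
    have := measure_inter_add_diff (μ := ν) T2 hT1
    rw [Set.inter_comm] at this
    rw [← this, hnull, add_zero]
  -- step 4: ν T = ν T1 - ν T2
  have step4 : ν T = ν T1 - ν T2 := by
    rw [hsplit, show T1 \ T2 = T1 \ (T1 ∩ T2) from (Set.diff_self_inter).symm,
      measure_diff Set.inter_subset_left (hT1.inter hT2).nullMeasurableSet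
        (measure_ne_top ν _), hinter]
  -- step 5: ν T1
  have step5 : ν T1 = ENNReal.ofReal (Fcdf ka θ t) := by
    have : T1 = Set.Iic t ×ˢ Set.univ := by
      ext p; simp [hT1def]
    rw [this, hν, Measure.prod_prod, measure_univ, mul_one, hμA,
      gamma_apply_Iic ka hka θ hθ t ht.le]
  -- step 6: ν T2 as an integral
  set J : ℝ := ∫ b in (0:ℝ)..t,
    (b ^ (kb - 1 : ℕ) * Real.exp (-b/θ) / (Real.Gamma kb * θ^kb)) * Fcdf ka θ (t - b) with hJ
  have hJnonneg : 0 ≤ J := by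
    apply intervalIntegral.integral_nonneg ht.le
    intro b hb
    have hb0 : 0 ≤ b := hb.1
    have hb1 : b ≤ t := hb.2
    have h1 : 0 ≤ b ^ (kb - 1 : ℕ) * Real.exp (-b/θ) / (Real.Gamma kb * θ^kb) := by positivity
    exact mul_nonneg h1 (Fcdf_nonneg ka hka θ hθ (t - b) (by linarith))
  have step6 : ν T2 = ENNReal.ofReal J := by
    have hsec : ∀ b : ℝ, (fun a => (a, b)) ⁻¹' T2 = Set.Iio (t - b) := by
      intro b; ext a
      simp only [hT2def, Set.mem_preimage, Set.mem_setOf_eq, Set.mem_Iio]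
      constructor <;> intro h <;> linarith
    have hμAIio : ∀ b : ℝ, μA (Set.Iio (t - b)) =
        ENNReal.ofReal (if 0 ≤ t - b then Fcdf ka θ (t - b) else 0) := by
      intro b
      by_cases h : 0 ≤ t - b
      · rw [if_pos h, hμA]; exact gamma_apply_Iio ka hka θ hθ _ h
      · rw [if_neg h, hμA, gamma_apply_nonpos ka hka θ _ (by linarith [not_le.1 h])]
        simp
    have hmeasg : Measurable (fun b : ℝ =>
        ENNReal.ofReal (if 0 ≤ t - b then Fcdf ka θ (t - b) else 0)) := by
      refine Measurable.ennreal_ofReal (Measurable.ite ?_ ?_ measurable_const)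
      · exact measurableSet_le measurable_const (measurable_const.sub measurable_id)
      · exact (continuous_Fcdf ka θ).measurable.comp (measurable_const.sub measurable_id)
    have hcont : Continuous (fun b : ℝ =>
        (b ^ (kb - 1 : ℕ) * Real.exp (-b/θ) / (Real.Gamma kb * θ^kb)) * Fcdf ka θ (t - b)) := by
      exact (((continuous_pow _).mul ((continuous_id.neg.div_const θ).rexp)).div_const _).mul
        ((continuous_Fcdf ka θ).comp (continuous_const.sub continuous_id))
    set h : ℝ → ℝ := fun b =>
      (b ^ (kb - 1 : ℕ) * Real.exp (-b/θ) / (Real.Gamma kb * θ^kb)) * Fcdf ka θ (t - b) with hh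
    have hprod : ∀ b : ℝ,
        ((if 0 < b then ENNReal.ofReal
            (b ^ ((kb:ℝ) - 1) * Real.exp (-b / θ) / (Real.Gamma kb * θ ^ (kb:ℝ))) else 0)
          * ENNReal.ofReal (if 0 ≤ t - b then Fcdf ka θ (t - b) else 0))
        = ENNReal.ofReal ((Set.Ioo (0:ℝ) t).indicator h b) := by
      intro b
      rw [gamma_density_eq kb hkb θ b, Set.indicator_apply, Set.indicator_apply]
      simp only [Set.mem_Ioi, Set.mem_Ioo]
      by_cases hb : 0 < b
      · by_cases hbt : b < t
        · rw [if_pos hb, if_pos (show 0 < b ∧ b < t from ⟨hb, hbt⟩),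
            if_pos (show (0:ℝ) ≤ t - b by linarith), ← ENNReal.ofReal_mul (by positivity)]
        · have hz : (if 0 ≤ t - b then Fcdf ka θ (t - b) else 0) = 0 := by
            by_cases h0 : 0 ≤ t - b
            · rw [if_pos h0, show t - b = 0 by push_neg at hbt; linarith, Fcdf_zero ka hka θ]
            · rw [if_neg h0]
          rw [hz, if_pos hb, if_neg (show ¬(0 < b ∧ b < t) from fun hmem => hbt hmem.2)]
          simp
      · rw [if_neg hb, if_neg (show ¬(0 < b ∧ b < t) from fun hmem => hb hmem.1)]
        simp
    have hInt : Integrable ((Set.Ioo (0:ℝ) t).indicator h) volume := by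
      refine IntegrableOn.integrable_indicator ?_ measurableSet_Ioo
      exact (hcont.continuousOn.integrableOn_Icc).mono_set Set.Ioo_subset_Icc_self
    have hnn : 0 ≤ᵐ[volume] (Set.Ioo (0:ℝ) t).indicator h := by
      refine Filter.Eventually.of_forall fun b => ?_
      refine Set.indicator_nonneg (fun b hb => ?_) b
      have hb0 : 0 < b := hb.1
      have hbt : b < t := hb.2
      have h1 : 0 ≤ b ^ (kb - 1 : ℕ) * Real.exp (-b/θ) / (Real.Gamma kb * θ^kb) := by positivity
      exact mul_nonneg h1 (Fcdf_nonneg ka hka θ hθ (t - b) (by linarith))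
    have hJeq : J = ∫ b, (Set.Ioo (0:ℝ) t).indicator h b := by
      rw [hJ, intervalIntegral.integral_of_le ht.le, ← integral_indicator measurableSet_Ioc]
      congr 1
      funext b
      rw [Set.indicator_apply, Set.indicator_apply]
      by_cases hb : b ∈ Set.Ioo (0:ℝ) t
      · rw [if_pos hb, if_pos (Set.Ioo_subset_Ioc_self hb)]
      · by_cases hb2 : b ∈ Set.Ioc (0:ℝ) t
        · have hbt : b = t := by
            rcases hb2 with ⟨h1, h2⟩
            by_contra hne
            exact hb ⟨h1, lt_of_le_of_ne h2 hne⟩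
          rw [if_pos hb2, if_neg hb, hbt, sub_self, Fcdf_zero ka hka θ, mul_zero]
        · rw [if_neg hb, if_neg hb2]
    rw [hν, Measure.prod_apply_symm hT2]
    simp_rw [hsec, hμAIio]
    rw [hμB, gammaScaleMeasure, lintegral_withDensity_eq_lintegral_mul volume
      (gamma_density_measurable kb hkb θ) hmeasg]
    have : ∀ b : ℝ, ((fun x : ℝ => if 0 < x then ENNReal.ofReal
          (x ^ ((kb:ℝ) - 1) * Real.exp (-x / θ) / (Real.Gamma kb * θ ^ (kb:ℝ))) else 0) *
        fun b : ℝ => ENNReal.ofReal (if 0 ≤ t - b then Fcdf ka θ (t - b) else 0)) b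
        = ENNReal.ofReal ((Set.Ioo (0:ℝ) t).indicator h b) := fun b => hprod b
    rw [lintegral_congr this, ← ofReal_integral_eq_lintegral_ofReal hInt hnn, hJeq]
  -- step 7: evaluate J
  have step7 : J = Fcdf kb θ t - Real.exp (-t / θ) / (Real.Gamma kb * θ ^ kb) *
            ∑ μ ∈ Finset.range ka, (1 / (Nat.factorial μ * θ ^ μ)) *
              ∑ ν ∈ Finset.range (μ + 1),
                (Nat.choose μ ν : ℝ) * (-1 : ℝ) ^ (μ - ν) * t ^ (kb + μ) /
                  ((kb : ℝ) + (μ : ℝ) - (ν : ℝ)) := by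
    have hθ0 : θ ≠ 0 := ne_of_gt hθ
    have hΓ0 : Real.Gamma kb ≠ 0 := ne_of_gt hΓb
    have hpoint : ∀ b : ℝ,
        (b ^ (kb - 1 : ℕ) * Real.exp (-b/θ) / (Real.Gamma kb * θ^kb)) * Fcdf ka θ (t - b)
        = b ^ (kb - 1 : ℕ) * Real.exp (-b/θ) / (Real.Gamma kb * θ^kb)
          - ∑ μ ∈ Finset.range ka,
              (Real.exp (-t/θ) / (Real.Gamma kb * θ^kb * θ^μ * (Nat.factorial μ)))
                * (b ^ (kb - 1 : ℕ) * (t - b)^μ) := by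
      intro b
      rw [Fcdf, mul_sub, mul_one]
      congr 1
      simp only [expSum, Finset.mul_sum]
      refine Finset.sum_congr rfl fun μ _ => ?_
      have hexp : Real.exp (-b/θ) * Real.exp (-((t-b)/θ)) = Real.exp (-t/θ) := by
        rw [← Real.exp_add]
        congr 1
        field_simp
        ring
      rw [div_pow]
      linear_combination (b ^ (kb - 1 : ℕ) * (t-b)^μ /
        (Real.Gamma kb * θ^(kb:ℕ) * θ^μ * (Nat.factorial μ : ℝ))) * hexp
    have h1 : IntervalIntegrable (fun b : ℝ =>
        b ^ (kb - 1 : ℕ) * Real.exp (-b/θ) / (Real.Gamma kb * θ^kb)) volume 0 t :=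
      ((((continuous_pow _).mul ((continuous_id.neg.div_const θ).rexp)).div_const
        _)).intervalIntegrable 0 t
    have h2 : ∀ μ ∈ Finset.range ka, IntervalIntegrable (fun b : ℝ =>
        (Real.exp (-t/θ) / (Real.Gamma kb * θ^kb * θ^μ * (Nat.factorial μ)))
          * (b ^ (kb - 1 : ℕ) * (t - b)^μ)) volume 0 t := by
      intro μ _
      exact (continuous_const.mul ((continuous_pow _).mul
        ((continuous_const.sub continuous_id).pow μ))).intervalIntegrable 0 t
    have hsum : IntervalIntegrable (fun b : ℝ => ∑ μ ∈ Finset.range ka,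
        (Real.exp (-t/θ) / (Real.Gamma kb * θ^kb * θ^μ * (Nat.factorial μ)))
          * (b ^ (kb - 1 : ℕ) * (t - b)^μ)) volume 0 t := by
      refine (continuous_finset_sum _ fun μ _ => ?_).intervalIntegrable 0 t
      exact continuous_const.mul ((continuous_pow _).mul
        ((continuous_const.sub continuous_id).pow μ))
    rw [hJ]
    simp_rw [hpoint]
    rw [intervalIntegral.integral_sub h1 hsum, density_integral kb hkb θ hθ t,
      intervalIntegral.integral_finset_sum h2]
    congr 1
    rw [Finset.mul_sum]
    refine Finset.sum_congr rfl fun μ _ => ?_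
    rw [intervalIntegral.integral_const_mul]
    have hbint : ∫ b in (0:ℝ)..t, b ^ (kb - 1 : ℕ) * (t - b)^μ
        = ∑ ν ∈ Finset.range (μ + 1),
            (Nat.choose μ ν : ℝ) * (-1 : ℝ) ^ (μ - ν) * t ^ (kb + μ) /
              ((kb : ℝ) + (μ : ℝ) - (ν : ℝ)) := beta_integral kb hkb μ t
    rw [hbint, ← mul_assoc]
    congr 1
    have hfac : (Nat.factorial μ : ℝ) ≠ 0 := by positivity
    field_simp
  -- final assembly
  rw [step1, step4, step5, step6, ← ENNReal.ofReal_sub _ hJnonneg]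
  congr 1
  rw [step7, lowerGamma_div_Gamma ka hka θ hθ t, lowerGamma_div_Gamma kb hkb θ hθ t]
  ring
end
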